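/- If λ = 1, then the derivative of the quadratic functional q vanishes at H ∈ W if and only if the symmetric part in the last two indices agrees with that of K, i.e. H_{abc} + H_{acb} = K_{abc} + K_{acb} for all a,b,c (the totally antisymmetric part of H remaining undetermined); moreover q takes the same value at every such critical point, namely the value q(K). -/

import Mathlib

open Finset

noncomputable section

/- Index set {0,1,2,3}. -/
abbrev Idx := Fin 4

/-- The Minkowski metric η_{ab} = diag(−1,1,1,1) (which equals its inverse η^{ab}). -/
def ηm (a b : Idx) : ℝ := if a = b then (if a = (0 : Idx) then -1 else 1) else 0

/- Rank-3 tensors H_{abc} (all indices lowered). -/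
abbrev T3 := Idx → Idx → Idx → ℝ

/-- Raising all three indices: H^{abc} = η^{aa'} η^{bb'} η^{cc'} H_{a'b'c'}. -/
def up3 (H : T3) (a b c : Idx) : ℝ :=
  ∑ a', ∑ b', ∑ c', ηm a a' * ηm b b' * ηm c c' * H a' b' c'

/-- Total antisymmetrization H_{[abc]} with weight 1/3!. -/
def asym (H : T3) (a b c : Idx) : ℝ :=
  (H a b c - H a c b + H b c a - H b a c + H c a b - H c b a) / 6

/-- The contraction H^a{}_{ca} (free index c): η^{aa'} H_{a'ca}. -/
def tr1 (H : T3) (c : Idx) : ℝ := ∑ a, ∑ a', ηm a a' * H a' c a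

/-- The contraction H^{cb}{}_b (free index c): η^{cc'} η^{bb'} H_{c'b'b}. -/
def tr2 (H : T3) (c : Idx) : ℝ := ∑ b, ∑ c', ∑ b', ηm c c' * ηm b b' * H c' b' b

/-- The quadratic functional
`q(H) = H^{abc}(H_{cba} − 2K_{cba}) + H^a{}_{ca}(H^{cb}{}_b − 2K^{cb}{}_b)
        + λ H^{[abc]}(H_{[abc]} − 2K_{[abc]})`. -/
def qfun (lam : ℝ) (K H : T3) : ℝ :=
  (∑ a, ∑ b, ∑ c, up3 H a b c * (H c b a - 2 * K c b a))
  + (∑ c, tr1 H c * (tr2 H c - 2 * tr2 K c))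
  + lam * ∑ a, ∑ b, ∑ c,
      up3 (fun x y z => asym H x y z) a b c * (asym H a b c - 2 * asym K a b c)

-- helpers
def ee (a : Idx) : ℝ := if a = 0 then -1 else 1
lemma ηm_eq (a b : Idx) : ηm a b = if a = b then ee a else 0 := by
  by_cases h : a = b <;> simp [ηm, ee, h]

lemma up3_eq (H : T3) (a b c : Idx) : up3 H a b c = ee a * ee b * ee c * H a b c := by
  simp [up3, ηm_eq, ite_mul, zero_mul, mul_ite, mul_zero, Finset.sum_ite_eq, Finset.mem_univ]

lemma tr1_eq (H : T3) (c : Idx) : tr1 H c = ∑ a, ee a * H a c a := by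
  simp [tr1, ηm_eq, ite_mul, zero_mul, Finset.sum_ite_eq, Finset.mem_univ]

lemma tr2_eq (H : T3) (c : Idx) : tr2 H c = ee c * ∑ b, ee b * H c b b := by
  simp [tr2, ηm_eq, ite_mul, zero_mul, mul_ite, mul_zero, Finset.sum_ite_eq, Finset.mem_univ,
    Fin.sum_univ_four]
  ring


def B1f (X Y : T3) : ℝ := ∑ a, ∑ b, ∑ c, ee a * ee b * ee c * X a b c * Y c b a
def t1f (X : T3) (c : Idx) : ℝ := ∑ a, ee a * X a c a
def t2f (X : T3) (c : Idx) : ℝ := ee c * ∑ b, ee b * X c b b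
def B2f (X Y : T3) : ℝ := ∑ c, t1f X c * t2f Y c
def B3f (X Y : T3) : ℝ := ∑ a, ∑ b, ∑ c, ee a * ee b * ee c * asym X a b c * asym Y a b c
def Bf (X Y : T3) : ℝ := B1f X Y + B2f X Y + B3f X Y

lemma qfun_eq (K H : T3) : qfun 1 K H = Bf H H - 2 * Bf H K := by
  simp only [qfun, Bf, B1f, B2f, B3f, t1f, t2f, up3_eq, tr1_eq, tr2_eq, one_mul,
    Fin.sum_univ_four]
  ring

lemma asym_add (X Y : T3) (a b c : Idx) :
    asym (X + Y) a b c = asym X a b c + asym Y a b c := by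
  simp only [asym, Pi.add_apply]; ring

lemma asym_smul (r : ℝ) (X : T3) (a b c : Idx) :
    asym (r • X) a b c = r * asym X a b c := by
  simp only [asym, Pi.smul_apply, smul_eq_mul]; ring

set_option maxHeartbeats 2000000 in
def B0 : T3 →ₗ[ℝ] T3 →ₗ[ℝ] ℝ :=
  LinearMap.mk₂ ℝ Bf
    (fun X X' Y => by
      simp only [Bf, B1f, B2f, B3f, t1f, t2f, asym_add, Pi.add_apply, Fin.sum_univ_four]; ring)
    (fun r X Y => by
      simp only [Bf, B1f, B2f, B3f, t1f, t2f, asym_smul, Pi.smul_apply, smul_eq_mul,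
        Fin.sum_univ_four]; ring)
    (fun X Y Y' => by
      simp only [Bf, B1f, B2f, B3f, t1f, t2f, asym_add, Pi.add_apply, Fin.sum_univ_four]; ring)
    (fun r X Y => by
      simp only [Bf, B1f, B2f, B3f, t1f, t2f, asym_smul, Pi.smul_apply, smul_eq_mul,
        Fin.sum_univ_four]; ring)

lemma B0_apply (X Y : T3) : B0 X Y = Bf X Y := rfl


/-- `W`: the space of rank-3 tensors antisymmetric in their first two indices. -/
def Wsub : Submodule ℝ T3 where
  carrier := {H | ∀ a b c, H a b c = -H b a c}
  add_mem' := by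
    intro x y hx hy a b c
    simp only [Pi.add_apply]
    rw [hx a b c, hy a b c]; ring
  zero_mem' := by intro a b c; simp
  smul_mem' := by
    intro r x hx a b c
    simp only [Pi.smul_apply, smul_eq_mul]
    rw [hx a b c]; ring

lemma mem_Wsub {H : T3} : H ∈ Wsub ↔ ∀ a b c, H a b c = -H b a c := Iff.rfl

lemma t2f_eq {Y : T3} (hY : Y ∈ Wsub) (c : Idx) : t2f Y c = -(ee c * t1f Y c) := by
  rw [mem_Wsub] at hY
  simp only [t2f, t1f, Fin.sum_univ_four]
  rw [hY c 0 0, hY c 1 1, hY c 2 2, hY c 3 3]; ring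

lemma Bf_symm {X Y : T3} (hX : X ∈ Wsub) (hY : Y ∈ Wsub) : Bf X Y = Bf Y X := by
  have h1 : B1f X Y = B1f Y X := by
    simp only [B1f, Fin.sum_univ_four]; ring
  have h3 : B3f X Y = B3f Y X := by
    simp only [B3f, Fin.sum_univ_four]; ring
  have h2 : B2f X Y = B2f Y X := by
    simp only [B2f, t2f_eq hX, t2f_eq hY, Fin.sum_univ_four]; ring
  simp only [Bf, h1, h2, h3]

lemma Bf_sub_right (X A B : T3) : Bf X (A - B) = Bf X A - Bf X B := by
  have := (B0 X).map_sub A B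
  simpa [B0_apply] using this

lemma Bf_sub_left (A B Y : T3) : Bf (A - B) Y = Bf A Y - Bf B Y := by
  have h := congrArg (fun (f : T3 →ₗ[ℝ] ℝ) => f Y) (B0.map_sub A B)
  simp only [LinearMap.sub_apply] at h
  exact h

def BE : (↥Wsub) →ₗ[ℝ] (↥Wsub) →ₗ[ℝ] ℝ := B0.compl₁₂ Wsub.subtype Wsub.subtype

def BE2 : (↥Wsub) →ₗ[ℝ] ((↥Wsub) →L[ℝ] ℝ) where
  toFun X := LinearMap.toContinuousLinearMap (BE X)
  map_add' X Y := by simp only [map_add]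
  map_smul' r X := by simp only [map_smul, RingHom.id_apply]

def Bc : (↥Wsub) →L[ℝ] (↥Wsub) →L[ℝ] ℝ := ⟨BE2, by exact LinearMap.continuous_of_finiteDimensional (𝕜 := ℝ) (E := ↥Wsub) (F' := (↥Wsub →L[ℝ] ℝ)) BE2⟩

lemma Bc_apply (X Y : ↥Wsub) : Bc X Y = Bf ↑X ↑Y := by
  simp only [Bc, BE2, BE]
  rfl

lemma hasFDeriv_q (K H : ↥Wsub) :
    HasFDerivAt (fun H : ↥Wsub => qfun 1 (K : T3) (H : T3))
      (((Bc.isBoundedBilinearMap.deriv (H, H)).comp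
          ((ContinuousLinearMap.id ℝ (↥Wsub)).prod (ContinuousLinearMap.id ℝ (↥Wsub)))) -
        (2 : ℝ) • (Bc.flip K)) H := by
  have heq : (fun H : ↥Wsub => qfun 1 (K : T3) (H : T3)) =
      fun H : ↥Wsub => Bc H H - (2 : ℝ) * (Bc.flip K H) := by
    funext X
    rw [qfun_eq]
    simp only [ContinuousLinearMap.flip_apply, Bc_apply]
  rw [heq]
  have h1 : HasFDerivAt (fun H : ↥Wsub => Bc H H)
      ((Bc.isBoundedBilinearMap.deriv (H, H)).comp
        ((ContinuousLinearMap.id ℝ (↥Wsub)).prod (ContinuousLinearMap.id ℝ (↥Wsub)))) H := by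
    have hdiag : HasFDerivAt (fun X : ↥Wsub => (X, X))
        ((ContinuousLinearMap.id ℝ (↥Wsub)).prod (ContinuousLinearMap.id ℝ (↥Wsub))) H := by
      exact HasFDerivAt.prodMk (hasFDerivAt_id H) (hasFDerivAt_id H)
    have h0 := HasFDerivAt.comp (g := fun p : ↥Wsub × ↥Wsub => Bc p.1 p.2)
      (f := fun X : ↥Wsub => (X, X)) H (Bc.isBoundedBilinearMap.hasFDerivAt (H, H)) hdiag
    exact h0
  have h2 : HasFDerivAt (fun H : ↥Wsub => (2 : ℝ) * (Bc.flip K H)) ((2 : ℝ) • Bc.flip K) H :=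
    ((Bc.flip K).hasFDerivAt).const_mul 2
  exact h1.sub h2

lemma crit_iff (K H : ↥Wsub) :
    fderiv ℝ (fun H : ↥Wsub => qfun 1 (K : T3) (H : T3)) H = 0 ↔
      ∀ X : ↥Wsub, Bf (X : T3) ((H : T3) - (K : T3)) = 0 := by
  rw [(hasFDeriv_q K H).fderiv]
  rw [ContinuousLinearMap.ext_iff]
  constructor
  · intro h X
    have hX := h X
    simp only [ContinuousLinearMap.comp_apply, ContinuousLinearMap.prod_apply,
      ContinuousLinearMap.id_apply, ContinuousLinearMap.sub_apply,
      ContinuousLinearMap.smul_apply, ContinuousLinearMap.flip_apply,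
      ContinuousLinearMap.zero_apply, IsBoundedBilinearMap.deriv_apply, smul_eq_mul] at hX
    rw [Bc_apply, Bc_apply, Bc_apply] at hX
    rw [Bf_symm H.2 X.2] at hX
    rw [Bf_sub_right]
    linarith
  · intro h X
    have hX := h X
    rw [Bf_sub_right] at hX
    simp only [ContinuousLinearMap.comp_apply, ContinuousLinearMap.prod_apply,
      ContinuousLinearMap.id_apply, ContinuousLinearMap.sub_apply,
      ContinuousLinearMap.smul_apply, ContinuousLinearMap.flip_apply,
      ContinuousLinearMap.zero_apply, IsBoundedBilinearMap.deriv_apply, smul_eq_mul]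
    rw [Bc_apply, Bc_apply, Bc_apply]
    rw [Bf_symm H.2 X.2]
    linarith

def dd (a b : Idx) : ℝ := if a = b then 1 else 0
def bas (i j k : Idx) : T3 := fun a b c => dd a i * dd b j * dd c k - dd a j * dd b i * dd c k
lemma bas_mem (i j k : Idx) : bas i j k ∈ Wsub := by intro a b c; simp only [bas]; ring

lemma B3f_adj (X Y : T3) :
    B3f X Y = ∑ a, ∑ b, ∑ c, ee a * ee b * ee c * X a b c * asym Y a b c := by
  simp only [B3f, asym, Fin.sum_univ_four]
  ring

lemma B1f_bas (i j k : Idx) (D : T3) :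
    B1f (bas i j k) D = ee i * ee j * ee k * (D k j i - D k i j) := by
  simp only [B1f, bas, dd, mul_ite, ite_mul, mul_zero, zero_mul, mul_one, one_mul,
    sub_mul, mul_sub, Finset.sum_sub_distrib, Finset.sum_ite_eq', Finset.mem_univ, if_true]
  ring

lemma t1f_bas (i j k : Idx) (c : Idx) :
    t1f (bas i j k) c =
      (if i = k then ee i * dd c j else 0) - (if j = k then ee j * dd c i else 0) := by
  simp only [t1f, bas, dd, mul_ite, ite_mul, mul_zero, zero_mul, mul_one, one_mul,
    sub_mul, mul_sub, Finset.sum_sub_distrib, Finset.sum_ite_eq', Finset.mem_univ, if_true]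
  by_cases h1 : i = k <;> by_cases h2 : j = k <;>
    simp [h1, h2, Fin.sum_univ_four, dd] <;>
    (try ring_nf) <;>
    (try (intro hh1 hh2; subst hh1; subst hh2; simp_all)) <;>
    (try (simp [show k ≠ i from fun hh => h1 hh.symm, show k ≠ j from fun hh => h2 hh.symm]))

lemma B2f_bas (i j k : Idx) (D : T3) :
    B2f (bas i j k) D =
      (if i = k then ee i * t2f D j else 0) - (if j = k then ee j * t2f D i else 0) := by
  simp only [B2f, t1f_bas, dd, sub_mul, ite_mul, zero_mul, mul_assoc,
    Finset.sum_sub_distrib]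
  by_cases h1 : i = k <;> by_cases h2 : j = k <;>
    simp [h1, h2, Fin.sum_univ_four, dd, mul_ite, mul_zero, ite_mul, zero_mul] <;>
    (try (fin_cases j <;> simp [mul_comm] <;> fin_cases i <;> simp))

lemma B3f_bas (i j k : Idx) (D : T3) :
    B3f (bas i j k) D = ee i * ee j * ee k * (asym D i j k - asym D j i k) := by
  rw [B3f_adj]
  simp only [bas, dd, mul_ite, ite_mul, mul_zero, zero_mul, mul_one, one_mul,
    sub_mul, mul_sub, Finset.sum_sub_distrib, Finset.sum_ite_eq', Finset.mem_univ, if_true,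
    Fin.sum_univ_four]
  ring

lemma Bf_bas (i j k : Idx) (D : T3) :
    Bf (bas i j k) D =
      ee i * ee j * ee k * (D k j i - D k i j)
      + ((if i = k then ee i * t2f D j else 0) - (if j = k then ee j * t2f D i else 0))
      + ee i * ee j * ee k * (asym D i j k - asym D j i k) := by
  rw [Bf, B1f_bas, B2f_bas, B3f_bas]

set_option maxHeartbeats 4000000 in
lemma key_fwd (D : T3) (hD : ∀ a b c, D a b c = -D b a c)
    (h : ∀ X : T3, X ∈ Wsub → Bf X D = 0) :
    ∀ a b c : Idx, D a b c + D a c b = 0 := by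
  have hh010 := h (bas 0 1 0) (bas_mem 0 1 0)
  rw [Bf_bas] at hh010
  simp (config := { decide := true }) [ee, t2f, asym, Fin.sum_univ_four] at hh010
  have hh011 := h (bas 0 1 1) (bas_mem 0 1 1)
  rw [Bf_bas] at hh011
  simp (config := { decide := true }) [ee, t2f, asym, Fin.sum_univ_four] at hh011
  have hh012 := h (bas 0 1 2) (bas_mem 0 1 2)
  rw [Bf_bas] at hh012
  simp (config := { decide := true }) [ee, t2f, asym, Fin.sum_univ_four] at hh012
  have hh013 := h (bas 0 1 3) (bas_mem 0 1 3)
  rw [Bf_bas] at hh013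
  simp (config := { decide := true }) [ee, t2f, asym, Fin.sum_univ_four] at hh013
  have hh020 := h (bas 0 2 0) (bas_mem 0 2 0)
  rw [Bf_bas] at hh020
  simp (config := { decide := true }) [ee, t2f, asym, Fin.sum_univ_four] at hh020
  have hh021 := h (bas 0 2 1) (bas_mem 0 2 1)
  rw [Bf_bas] at hh021
  simp (config := { decide := true }) [ee, t2f, asym, Fin.sum_univ_four] at hh021
  have hh022 := h (bas 0 2 2) (bas_mem 0 2 2)
  rw [Bf_bas] at hh022
  simp (config := { decide := true }) [ee, t2f, asym, Fin.sum_univ_four] at hh022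
  have hh023 := h (bas 0 2 3) (bas_mem 0 2 3)
  rw [Bf_bas] at hh023
  simp (config := { decide := true }) [ee, t2f, asym, Fin.sum_univ_four] at hh023
  have hh030 := h (bas 0 3 0) (bas_mem 0 3 0)
  rw [Bf_bas] at hh030
  simp (config := { decide := true }) [ee, t2f, asym, Fin.sum_univ_four] at hh030
  have hh031 := h (bas 0 3 1) (bas_mem 0 3 1)
  rw [Bf_bas] at hh031
  simp (config := { decide := true }) [ee, t2f, asym, Fin.sum_univ_four] at hh031
  have hh032 := h (bas 0 3 2) (bas_mem 0 3 2)
  rw [Bf_bas] at hh032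
  simp (config := { decide := true }) [ee, t2f, asym, Fin.sum_univ_four] at hh032
  have hh033 := h (bas 0 3 3) (bas_mem 0 3 3)
  rw [Bf_bas] at hh033
  simp (config := { decide := true }) [ee, t2f, asym, Fin.sum_univ_four] at hh033
  have hh120 := h (bas 1 2 0) (bas_mem 1 2 0)
  rw [Bf_bas] at hh120
  simp (config := { decide := true }) [ee, t2f, asym, Fin.sum_univ_four] at hh120
  have hh121 := h (bas 1 2 1) (bas_mem 1 2 1)
  rw [Bf_bas] at hh121
  simp (config := { decide := true }) [ee, t2f, asym, Fin.sum_univ_four] at hh121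
  have hh122 := h (bas 1 2 2) (bas_mem 1 2 2)
  rw [Bf_bas] at hh122
  simp (config := { decide := true }) [ee, t2f, asym, Fin.sum_univ_four] at hh122
  have hh123 := h (bas 1 2 3) (bas_mem 1 2 3)
  rw [Bf_bas] at hh123
  simp (config := { decide := true }) [ee, t2f, asym, Fin.sum_univ_four] at hh123
  have hh130 := h (bas 1 3 0) (bas_mem 1 3 0)
  rw [Bf_bas] at hh130
  simp (config := { decide := true }) [ee, t2f, asym, Fin.sum_univ_four] at hh130
  have hh131 := h (bas 1 3 1) (bas_mem 1 3 1)
  rw [Bf_bas] at hh131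
  simp (config := { decide := true }) [ee, t2f, asym, Fin.sum_univ_four] at hh131
  have hh132 := h (bas 1 3 2) (bas_mem 1 3 2)
  rw [Bf_bas] at hh132
  simp (config := { decide := true }) [ee, t2f, asym, Fin.sum_univ_four] at hh132
  have hh133 := h (bas 1 3 3) (bas_mem 1 3 3)
  rw [Bf_bas] at hh133
  simp (config := { decide := true }) [ee, t2f, asym, Fin.sum_univ_four] at hh133
  have hh230 := h (bas 2 3 0) (bas_mem 2 3 0)
  rw [Bf_bas] at hh230
  simp (config := { decide := true }) [ee, t2f, asym, Fin.sum_univ_four] at hh230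
  have hh231 := h (bas 2 3 1) (bas_mem 2 3 1)
  rw [Bf_bas] at hh231
  simp (config := { decide := true }) [ee, t2f, asym, Fin.sum_univ_four] at hh231
  have hh232 := h (bas 2 3 2) (bas_mem 2 3 2)
  rw [Bf_bas] at hh232
  simp (config := { decide := true }) [ee, t2f, asym, Fin.sum_univ_four] at hh232
  have hh233 := h (bas 2 3 3) (bas_mem 2 3 3)
  rw [Bf_bas] at hh233
  simp (config := { decide := true }) [ee, t2f, asym, Fin.sum_univ_four] at hh233
  intro a b c
  fin_cases a <;> fin_cases b <;> fin_cases c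
  · show D 0 0 0 + D 0 0 0 = 0
    linear_combination (1) * hD 0 0 0
  · show D 0 0 1 + D 0 1 0 = 0
    linear_combination ((1/2)) * hh010 + ((-1/2)) * hh122 + ((-1/2)) * hh133 + ((3/4)) * hD 0 0 1 + ((1/2)) * hD 0 1 0 + ((-1/4)) * hD 1 1 1 + ((-1/2)) * hD 1 2 2 + ((-1/2)) * hD 1 3 3 + ((1/4)) * hD 2 2 1 + ((1/4)) * hD 3 3 1
  · show D 0 0 2 + D 0 2 0 = 0
    linear_combination ((1/2)) * hh020 + ((1/2)) * hh121 + ((-1/2)) * hh233 + ((3/4)) * hD 0 0 2 + ((1/2)) * hD 0 2 0 + ((1/4)) * hD 1 1 2 + ((-1/2)) * hD 1 2 1 + ((-1/4)) * hD 2 2 2 + ((-1/2)) * hD 2 3 3 + ((1/4)) * hD 3 3 2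
  · show D 0 0 3 + D 0 3 0 = 0
    linear_combination ((1/2)) * hh030 + ((1/2)) * hh131 + ((1/2)) * hh232 + ((3/4)) * hD 0 0 3 + ((1/2)) * hD 0 3 0 + ((1/4)) * hD 1 1 3 + ((-1/2)) * hD 1 3 1 + ((1/4)) * hD 2 2 3 + ((-1/2)) * hD 2 3 2 + ((-1/4)) * hD 3 3 3
  · show D 0 1 0 + D 0 0 1 = 0
    linear_combination ((1/2)) * hh010 + ((-1/2)) * hh122 + ((-1/2)) * hh133 + ((3/4)) * hD 0 0 1 + ((1/2)) * hD 0 1 0 + ((-1/4)) * hD 1 1 1 + ((-1/2)) * hD 1 2 2 + ((-1/2)) * hD 1 3 3 + ((1/4)) * hD 2 2 1 + ((1/4)) * hD 3 3 1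
  · show D 0 1 1 + D 0 1 1 = 0
    linear_combination (-1) * hh011 + (1) * hh022 + (1) * hh033 + ((1/2)) * hD 0 0 0 + (1) * hD 0 1 1 + (-1) * hD 0 2 2 + (-1) * hD 0 3 3 + ((-1/2)) * hD 1 1 0 + ((1/2)) * hD 2 2 0 + ((1/2)) * hD 3 3 0
  · show D 0 1 2 + D 0 2 1 = 0
    linear_combination (-1) * hh012 + (-1) * hh021 + (1) * hD 0 1 2 + (1) * hD 0 2 1 + (-1) * hD 1 2 0
  · show D 0 1 3 + D 0 3 1 = 0
    linear_combination (-1) * hh013 + (-1) * hh031 + (1) * hD 0 1 3 + (1) * hD 0 3 1 + (-1) * hD 1 3 0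
  · show D 0 2 0 + D 0 0 2 = 0
    linear_combination ((1/2)) * hh020 + ((1/2)) * hh121 + ((-1/2)) * hh233 + ((3/4)) * hD 0 0 2 + ((1/2)) * hD 0 2 0 + ((1/4)) * hD 1 1 2 + ((-1/2)) * hD 1 2 1 + ((-1/4)) * hD 2 2 2 + ((-1/2)) * hD 2 3 3 + ((1/4)) * hD 3 3 2
  · show D 0 2 1 + D 0 1 2 = 0
    linear_combination (-1) * hh012 + (-1) * hh021 + (1) * hD 0 1 2 + (1) * hD 0 2 1 + (-1) * hD 1 2 0
  · show D 0 2 2 + D 0 2 2 = 0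
    linear_combination (1) * hh011 + (-1) * hh022 + (1) * hh033 + ((1/2)) * hD 0 0 0 + (-1) * hD 0 1 1 + (1) * hD 0 2 2 + (-1) * hD 0 3 3 + ((1/2)) * hD 1 1 0 + ((-1/2)) * hD 2 2 0 + ((1/2)) * hD 3 3 0
  · show D 0 2 3 + D 0 3 2 = 0
    linear_combination (-1) * hh023 + (-1) * hh032 + (1) * hD 0 2 3 + (1) * hD 0 3 2 + (-1) * hD 2 3 0
  · show D 0 3 0 + D 0 0 3 = 0
    linear_combination ((1/2)) * hh030 + ((1/2)) * hh131 + ((1/2)) * hh232 + ((3/4)) * hD 0 0 3 + ((1/2)) * hD 0 3 0 + ((1/4)) * hD 1 1 3 + ((-1/2)) * hD 1 3 1 + ((1/4)) * hD 2 2 3 + ((-1/2)) * hD 2 3 2 + ((-1/4)) * hD 3 3 3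
  · show D 0 3 1 + D 0 1 3 = 0
    linear_combination (-1) * hh013 + (-1) * hh031 + (1) * hD 0 1 3 + (1) * hD 0 3 1 + (-1) * hD 1 3 0
  · show D 0 3 2 + D 0 2 3 = 0
    linear_combination (-1) * hh023 + (-1) * hh032 + (1) * hD 0 2 3 + (1) * hD 0 3 2 + (-1) * hD 2 3 0
  · show D 0 3 3 + D 0 3 3 = 0
    linear_combination (1) * hh011 + (1) * hh022 + (-1) * hh033 + ((1/2)) * hD 0 0 0 + (-1) * hD 0 1 1 + (-1) * hD 0 2 2 + (1) * hD 0 3 3 + ((1/2)) * hD 1 1 0 + ((1/2)) * hD 2 2 0 + ((-1/2)) * hD 3 3 0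
  · show D 1 0 0 + D 1 0 0 = 0
    linear_combination (-1) * hh010 + (1) * hh122 + (1) * hh133 + ((-1/2)) * hD 0 0 1 + (1) * hD 0 1 0 + ((1/2)) * hD 1 1 1 + (1) * hD 1 2 2 + (1) * hD 1 3 3 + ((-1/2)) * hD 2 2 1 + ((-1/2)) * hD 3 3 1
  · show D 1 0 1 + D 1 1 0 = 0
    linear_combination ((1/2)) * hh011 + ((-1/2)) * hh022 + ((-1/2)) * hh033 + ((-1/4)) * hD 0 0 0 + ((1/2)) * hD 0 1 1 + ((1/2)) * hD 0 2 2 + ((1/2)) * hD 0 3 3 + ((3/4)) * hD 1 1 0 + ((-1/4)) * hD 2 2 0 + ((-1/4)) * hD 3 3 0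
  · show D 1 0 2 + D 1 2 0 = 0
    linear_combination (2) * hh012 + (-1) * hh021 + (1) * hD 0 1 2 + (-1) * hD 0 2 1 + (1) * hD 1 2 0
  · show D 1 0 3 + D 1 3 0 = 0
    linear_combination (2) * hh013 + (-1) * hh031 + (1) * hD 0 1 3 + (-1) * hD 0 3 1 + (1) * hD 1 3 0
  · show D 1 1 0 + D 1 0 1 = 0
    linear_combination ((1/2)) * hh011 + ((-1/2)) * hh022 + ((-1/2)) * hh033 + ((-1/4)) * hD 0 0 0 + ((1/2)) * hD 0 1 1 + ((1/2)) * hD 0 2 2 + ((1/2)) * hD 0 3 3 + ((3/4)) * hD 1 1 0 + ((-1/4)) * hD 2 2 0 + ((-1/4)) * hD 3 3 0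
  · show D 1 1 1 + D 1 1 1 = 0
    linear_combination (1) * hD 1 1 1
  · show D 1 1 2 + D 1 2 1 = 0
    linear_combination ((1/2)) * hh020 + ((1/2)) * hh121 + ((1/2)) * hh233 + ((1/4)) * hD 0 0 2 + ((-1/2)) * hD 0 2 0 + ((3/4)) * hD 1 1 2 + ((1/2)) * hD 1 2 1 + ((1/4)) * hD 2 2 2 + ((1/2)) * hD 2 3 3 + ((-1/4)) * hD 3 3 2
  · show D 1 1 3 + D 1 3 1 = 0
    linear_combination ((1/2)) * hh030 + ((1/2)) * hh131 + ((-1/2)) * hh232 + ((1/4)) * hD 0 0 3 + ((-1/2)) * hD 0 3 0 + ((3/4)) * hD 1 1 3 + ((1/2)) * hD 1 3 1 + ((-1/4)) * hD 2 2 3 + ((1/2)) * hD 2 3 2 + ((1/4)) * hD 3 3 3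
  · show D 1 2 0 + D 1 0 2 = 0
    linear_combination (2) * hh012 + (-1) * hh021 + (1) * hD 0 1 2 + (-1) * hD 0 2 1 + (1) * hD 1 2 0
  · show D 1 2 1 + D 1 1 2 = 0
    linear_combination ((1/2)) * hh020 + ((1/2)) * hh121 + ((1/2)) * hh233 + ((1/4)) * hD 0 0 2 + ((-1/2)) * hD 0 2 0 + ((3/4)) * hD 1 1 2 + ((1/2)) * hD 1 2 1 + ((1/4)) * hD 2 2 2 + ((1/2)) * hD 2 3 3 + ((-1/4)) * hD 3 3 2
  · show D 1 2 2 + D 1 2 2 = 0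
    linear_combination (-1) * hh010 + (1) * hh122 + (-1) * hh133 + ((-1/2)) * hD 0 0 1 + (1) * hD 0 1 0 + ((-1/2)) * hD 1 1 1 + (1) * hD 1 2 2 + (-1) * hD 1 3 3 + ((-1/2)) * hD 2 2 1 + ((1/2)) * hD 3 3 1
  · show D 1 2 3 + D 1 3 2 = 0
    linear_combination (1) * hh123 + (1) * hh132 + (1) * hD 1 2 3 + (1) * hD 1 3 2 + (-1) * hD 2 3 1
  · show D 1 3 0 + D 1 0 3 = 0
    linear_combination (2) * hh013 + (-1) * hh031 + (1) * hD 0 1 3 + (-1) * hD 0 3 1 + (1) * hD 1 3 0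
  · show D 1 3 1 + D 1 1 3 = 0
    linear_combination ((1/2)) * hh030 + ((1/2)) * hh131 + ((-1/2)) * hh232 + ((1/4)) * hD 0 0 3 + ((-1/2)) * hD 0 3 0 + ((3/4)) * hD 1 1 3 + ((1/2)) * hD 1 3 1 + ((-1/4)) * hD 2 2 3 + ((1/2)) * hD 2 3 2 + ((1/4)) * hD 3 3 3
  · show D 1 3 2 + D 1 2 3 = 0
    linear_combination (1) * hh123 + (1) * hh132 + (1) * hD 1 2 3 + (1) * hD 1 3 2 + (-1) * hD 2 3 1
  · show D 1 3 3 + D 1 3 3 = 0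
    linear_combination (-1) * hh010 + (-1) * hh122 + (1) * hh133 + ((-1/2)) * hD 0 0 1 + (1) * hD 0 1 0 + ((-1/2)) * hD 1 1 1 + (-1) * hD 1 2 2 + (1) * hD 1 3 3 + ((1/2)) * hD 2 2 1 + ((-1/2)) * hD 3 3 1
  · show D 2 0 0 + D 2 0 0 = 0
    linear_combination (-1) * hh020 + (-1) * hh121 + (1) * hh233 + ((-1/2)) * hD 0 0 2 + (1) * hD 0 2 0 + ((-1/2)) * hD 1 1 2 + (1) * hD 1 2 1 + ((1/2)) * hD 2 2 2 + (1) * hD 2 3 3 + ((-1/2)) * hD 3 3 2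
  · show D 2 0 1 + D 2 1 0 = 0
    linear_combination (-1) * hh012 + (2) * hh021 + (-1) * hD 0 1 2 + (1) * hD 0 2 1 + (1) * hD 1 2 0
  · show D 2 0 2 + D 2 2 0 = 0
    linear_combination ((-1/2)) * hh011 + ((1/2)) * hh022 + ((-1/2)) * hh033 + ((-1/4)) * hD 0 0 0 + ((1/2)) * hD 0 1 1 + ((1/2)) * hD 0 2 2 + ((1/2)) * hD 0 3 3 + ((-1/4)) * hD 1 1 0 + ((3/4)) * hD 2 2 0 + ((-1/4)) * hD 3 3 0
  · show D 2 0 3 + D 2 3 0 = 0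
    linear_combination (2) * hh023 + (-1) * hh032 + (1) * hD 0 2 3 + (-1) * hD 0 3 2 + (1) * hD 2 3 0
  · show D 2 1 0 + D 2 0 1 = 0
    linear_combination (-1) * hh012 + (2) * hh021 + (-1) * hD 0 1 2 + (1) * hD 0 2 1 + (1) * hD 1 2 0
  · show D 2 1 1 + D 2 1 1 = 0
    linear_combination (-1) * hh020 + (-1) * hh121 + (-1) * hh233 + ((-1/2)) * hD 0 0 2 + (1) * hD 0 2 0 + ((-1/2)) * hD 1 1 2 + (1) * hD 1 2 1 + ((-1/2)) * hD 2 2 2 + (-1) * hD 2 3 3 + ((1/2)) * hD 3 3 2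
  · show D 2 1 2 + D 2 2 1 = 0
    linear_combination ((1/2)) * hh010 + ((-1/2)) * hh122 + ((1/2)) * hh133 + ((1/4)) * hD 0 0 1 + ((-1/2)) * hD 0 1 0 + ((1/4)) * hD 1 1 1 + ((1/2)) * hD 1 2 2 + ((1/2)) * hD 1 3 3 + ((3/4)) * hD 2 2 1 + ((-1/4)) * hD 3 3 1
  · show D 2 1 3 + D 2 3 1 = 0
    linear_combination (-2) * hh123 + (1) * hh132 + (1) * hD 1 2 3 + (-1) * hD 1 3 2 + (1) * hD 2 3 1
  · show D 2 2 0 + D 2 0 2 = 0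
    linear_combination ((-1/2)) * hh011 + ((1/2)) * hh022 + ((-1/2)) * hh033 + ((-1/4)) * hD 0 0 0 + ((1/2)) * hD 0 1 1 + ((1/2)) * hD 0 2 2 + ((1/2)) * hD 0 3 3 + ((-1/4)) * hD 1 1 0 + ((3/4)) * hD 2 2 0 + ((-1/4)) * hD 3 3 0
  · show D 2 2 1 + D 2 1 2 = 0
    linear_combination ((1/2)) * hh010 + ((-1/2)) * hh122 + ((1/2)) * hh133 + ((1/4)) * hD 0 0 1 + ((-1/2)) * hD 0 1 0 + ((1/4)) * hD 1 1 1 + ((1/2)) * hD 1 2 2 + ((1/2)) * hD 1 3 3 + ((3/4)) * hD 2 2 1 + ((-1/4)) * hD 3 3 1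
  · show D 2 2 2 + D 2 2 2 = 0
    linear_combination (1) * hD 2 2 2
  · show D 2 2 3 + D 2 3 2 = 0
    linear_combination ((1/2)) * hh030 + ((-1/2)) * hh131 + ((1/2)) * hh232 + ((1/4)) * hD 0 0 3 + ((-1/2)) * hD 0 3 0 + ((-1/4)) * hD 1 1 3 + ((1/2)) * hD 1 3 1 + ((3/4)) * hD 2 2 3 + ((1/2)) * hD 2 3 2 + ((1/4)) * hD 3 3 3
  · show D 2 3 0 + D 2 0 3 = 0
    linear_combination (2) * hh023 + (-1) * hh032 + (1) * hD 0 2 3 + (-1) * hD 0 3 2 + (1) * hD 2 3 0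
  · show D 2 3 1 + D 2 1 3 = 0
    linear_combination (-2) * hh123 + (1) * hh132 + (1) * hD 1 2 3 + (-1) * hD 1 3 2 + (1) * hD 2 3 1
  · show D 2 3 2 + D 2 2 3 = 0
    linear_combination ((1/2)) * hh030 + ((-1/2)) * hh131 + ((1/2)) * hh232 + ((1/4)) * hD 0 0 3 + ((-1/2)) * hD 0 3 0 + ((-1/4)) * hD 1 1 3 + ((1/2)) * hD 1 3 1 + ((3/4)) * hD 2 2 3 + ((1/2)) * hD 2 3 2 + ((1/4)) * hD 3 3 3
  · show D 2 3 3 + D 2 3 3 = 0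
    linear_combination (-1) * hh020 + (1) * hh121 + (1) * hh233 + ((-1/2)) * hD 0 0 2 + (1) * hD 0 2 0 + ((1/2)) * hD 1 1 2 + (-1) * hD 1 2 1 + ((-1/2)) * hD 2 2 2 + (1) * hD 2 3 3 + ((-1/2)) * hD 3 3 2
  · show D 3 0 0 + D 3 0 0 = 0
    linear_combination (-1) * hh030 + (-1) * hh131 + (-1) * hh232 + ((-1/2)) * hD 0 0 3 + (1) * hD 0 3 0 + ((-1/2)) * hD 1 1 3 + (1) * hD 1 3 1 + ((-1/2)) * hD 2 2 3 + (1) * hD 2 3 2 + ((1/2)) * hD 3 3 3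
  · show D 3 0 1 + D 3 1 0 = 0
    linear_combination (-1) * hh013 + (2) * hh031 + (-1) * hD 0 1 3 + (1) * hD 0 3 1 + (1) * hD 1 3 0
  · show D 3 0 2 + D 3 2 0 = 0
    linear_combination (-1) * hh023 + (2) * hh032 + (-1) * hD 0 2 3 + (1) * hD 0 3 2 + (1) * hD 2 3 0
  · show D 3 0 3 + D 3 3 0 = 0
    linear_combination ((-1/2)) * hh011 + ((-1/2)) * hh022 + ((1/2)) * hh033 + ((-1/4)) * hD 0 0 0 + ((1/2)) * hD 0 1 1 + ((1/2)) * hD 0 2 2 + ((1/2)) * hD 0 3 3 + ((-1/4)) * hD 1 1 0 + ((-1/4)) * hD 2 2 0 + ((3/4)) * hD 3 3 0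
  · show D 3 1 0 + D 3 0 1 = 0
    linear_combination (-1) * hh013 + (2) * hh031 + (-1) * hD 0 1 3 + (1) * hD 0 3 1 + (1) * hD 1 3 0
  · show D 3 1 1 + D 3 1 1 = 0
    linear_combination (-1) * hh030 + (-1) * hh131 + (1) * hh232 + ((-1/2)) * hD 0 0 3 + (1) * hD 0 3 0 + ((-1/2)) * hD 1 1 3 + (1) * hD 1 3 1 + ((1/2)) * hD 2 2 3 + (-1) * hD 2 3 2 + ((-1/2)) * hD 3 3 3
  · show D 3 1 2 + D 3 2 1 = 0
    linear_combination (1) * hh123 + (-2) * hh132 + (-1) * hD 1 2 3 + (1) * hD 1 3 2 + (1) * hD 2 3 1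
  · show D 3 1 3 + D 3 3 1 = 0
    linear_combination ((1/2)) * hh010 + ((1/2)) * hh122 + ((-1/2)) * hh133 + ((1/4)) * hD 0 0 1 + ((-1/2)) * hD 0 1 0 + ((1/4)) * hD 1 1 1 + ((1/2)) * hD 1 2 2 + ((1/2)) * hD 1 3 3 + ((-1/4)) * hD 2 2 1 + ((3/4)) * hD 3 3 1
  · show D 3 2 0 + D 3 0 2 = 0
    linear_combination (-1) * hh023 + (2) * hh032 + (-1) * hD 0 2 3 + (1) * hD 0 3 2 + (1) * hD 2 3 0
  · show D 3 2 1 + D 3 1 2 = 0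
    linear_combination (1) * hh123 + (-2) * hh132 + (-1) * hD 1 2 3 + (1) * hD 1 3 2 + (1) * hD 2 3 1
  · show D 3 2 2 + D 3 2 2 = 0
    linear_combination (-1) * hh030 + (1) * hh131 + (-1) * hh232 + ((-1/2)) * hD 0 0 3 + (1) * hD 0 3 0 + ((1/2)) * hD 1 1 3 + (-1) * hD 1 3 1 + ((-1/2)) * hD 2 2 3 + (1) * hD 2 3 2 + ((-1/2)) * hD 3 3 3
  · show D 3 2 3 + D 3 3 2 = 0
    linear_combination ((1/2)) * hh020 + ((-1/2)) * hh121 + ((-1/2)) * hh233 + ((1/4)) * hD 0 0 2 + ((-1/2)) * hD 0 2 0 + ((-1/4)) * hD 1 1 2 + ((1/2)) * hD 1 2 1 + ((1/4)) * hD 2 2 2 + ((1/2)) * hD 2 3 3 + ((3/4)) * hD 3 3 2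
  · show D 3 3 0 + D 3 0 3 = 0
    linear_combination ((-1/2)) * hh011 + ((-1/2)) * hh022 + ((1/2)) * hh033 + ((-1/4)) * hD 0 0 0 + ((1/2)) * hD 0 1 1 + ((1/2)) * hD 0 2 2 + ((1/2)) * hD 0 3 3 + ((-1/4)) * hD 1 1 0 + ((-1/4)) * hD 2 2 0 + ((3/4)) * hD 3 3 0
  · show D 3 3 1 + D 3 1 3 = 0
    linear_combination ((1/2)) * hh010 + ((1/2)) * hh122 + ((-1/2)) * hh133 + ((1/4)) * hD 0 0 1 + ((-1/2)) * hD 0 1 0 + ((1/4)) * hD 1 1 1 + ((1/2)) * hD 1 2 2 + ((1/2)) * hD 1 3 3 + ((-1/4)) * hD 2 2 1 + ((3/4)) * hD 3 3 1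
  · show D 3 3 2 + D 3 2 3 = 0
    linear_combination ((1/2)) * hh020 + ((-1/2)) * hh121 + ((-1/2)) * hh233 + ((1/4)) * hD 0 0 2 + ((-1/2)) * hD 0 2 0 + ((-1/4)) * hD 1 1 2 + ((1/2)) * hD 1 2 1 + ((1/4)) * hD 2 2 2 + ((1/2)) * hD 2 3 3 + ((3/4)) * hD 3 3 2
  · show D 3 3 3 + D 3 3 3 = 0
    linear_combination (1) * hD 3 3 3

set_option maxHeartbeats 4000000 in
lemma key_bwd (D : T3) (hD1 : ∀ a b c : Idx, D a b c = -D b a c)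
    (hD2 : ∀ a b c : Idx, D a b c = -D a c b) :
    ∀ X : T3, X ∈ Wsub → Bf X D = 0 := by
  intro X hX
  have hc000 : D 0 0 0 = 0 := by linarith [hD1 0 0 0, hD2 0 0 0]
  have hc001 : D 0 0 1 = 0 := by linarith [hD1 1 0 0, hD2 1 0 0, hD1 0 0 1, hD2 0 0 1, hD1 0 1 0, hD2 0 1 0]
  have hc002 : D 0 0 2 = 0 := by linarith [hD1 0 2 0, hD2 0 2 0, hD1 0 0 2, hD2 0 0 2, hD1 2 0 0, hD2 2 0 0]
  have hc003 : D 0 0 3 = 0 := by linarith [hD1 3 0 0, hD2 3 0 0, hD1 0 3 0, hD2 0 3 0, hD1 0 0 3, hD2 0 0 3]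
  have hc010 : D 0 1 0 = 0 := by linarith [hD1 1 0 0, hD2 1 0 0, hD1 0 0 1, hD2 0 0 1, hD1 0 1 0, hD2 0 1 0]
  have hc011 : D 0 1 1 = 0 := by linarith [hD1 1 0 1, hD2 1 0 1, hD1 1 1 0, hD2 1 1 0, hD1 0 1 1, hD2 0 1 1]
  have hc020 : D 0 2 0 = 0 := by linarith [hD1 0 2 0, hD2 0 2 0, hD1 0 0 2, hD2 0 0 2, hD1 2 0 0, hD2 2 0 0]
  have hc021 : D 0 2 1 = -D 0 1 2 := by linarith [hD1 0 2 1, hD2 0 2 1, hD1 1 2 0, hD2 1 2 0, hD1 2 1 0, hD2 2 1 0, hD1 2 0 1, hD2 2 0 1, hD1 0 1 2, hD2 0 1 2, hD1 1 0 2, hD2 1 0 2]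
  have hc022 : D 0 2 2 = 0 := by linarith [hD1 0 2 2, hD2 0 2 2, hD1 2 0 2, hD2 2 0 2, hD1 2 2 0, hD2 2 2 0]
  have hc030 : D 0 3 0 = 0 := by linarith [hD1 3 0 0, hD2 3 0 0, hD1 0 3 0, hD2 0 3 0, hD1 0 0 3, hD2 0 0 3]
  have hc031 : D 0 3 1 = -D 0 1 3 := by linarith [hD1 0 3 1, hD2 0 3 1, hD1 0 1 3, hD2 0 1 3, hD1 3 1 0, hD2 3 1 0, hD1 1 0 3, hD2 1 0 3, hD1 1 3 0, hD2 1 3 0, hD1 3 0 1, hD2 3 0 1]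
  have hc032 : D 0 3 2 = -D 0 2 3 := by linarith [hD1 2 3 0, hD2 2 3 0, hD1 0 2 3, hD2 0 2 3, hD1 3 0 2, hD2 3 0 2, hD1 2 0 3, hD2 2 0 3, hD1 0 3 2, hD2 0 3 2, hD1 3 2 0, hD2 3 2 0]
  have hc033 : D 0 3 3 = 0 := by linarith [hD1 3 3 0, hD2 3 3 0, hD1 3 0 3, hD2 3 0 3, hD1 0 3 3, hD2 0 3 3]
  have hc100 : D 1 0 0 = 0 := by linarith [hD1 1 0 0, hD2 1 0 0, hD1 0 0 1, hD2 0 0 1, hD1 0 1 0, hD2 0 1 0]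
  have hc101 : D 1 0 1 = 0 := by linarith [hD1 1 0 1, hD2 1 0 1, hD1 1 1 0, hD2 1 1 0, hD1 0 1 1, hD2 0 1 1]
  have hc102 : D 1 0 2 = -D 0 1 2 := by linarith [hD1 0 2 1, hD2 0 2 1, hD1 1 2 0, hD2 1 2 0, hD1 2 1 0, hD2 2 1 0, hD1 2 0 1, hD2 2 0 1, hD1 0 1 2, hD2 0 1 2, hD1 1 0 2, hD2 1 0 2]
  have hc103 : D 1 0 3 = -D 0 1 3 := by linarith [hD1 0 3 1, hD2 0 3 1, hD1 0 1 3, hD2 0 1 3, hD1 3 1 0, hD2 3 1 0, hD1 1 0 3, hD2 1 0 3, hD1 1 3 0, hD2 1 3 0, hD1 3 0 1, hD2 3 0 1]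
  have hc110 : D 1 1 0 = 0 := by linarith [hD1 1 0 1, hD2 1 0 1, hD1 1 1 0, hD2 1 1 0, hD1 0 1 1, hD2 0 1 1]
  have hc111 : D 1 1 1 = 0 := by linarith [hD1 1 1 1, hD2 1 1 1]
  have hc112 : D 1 1 2 = 0 := by linarith [hD1 1 2 1, hD2 1 2 1, hD1 2 1 1, hD2 2 1 1, hD1 1 1 2, hD2 1 1 2]
  have hc113 : D 1 1 3 = 0 := by linarith [hD1 1 1 3, hD2 1 1 3, hD1 1 3 1, hD2 1 3 1, hD1 3 1 1, hD2 3 1 1]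
  have hc120 : D 1 2 0 = D 0 1 2 := by linarith [hD1 0 2 1, hD2 0 2 1, hD1 1 2 0, hD2 1 2 0, hD1 2 1 0, hD2 2 1 0, hD1 2 0 1, hD2 2 0 1, hD1 0 1 2, hD2 0 1 2, hD1 1 0 2, hD2 1 0 2]
  have hc121 : D 1 2 1 = 0 := by linarith [hD1 1 2 1, hD2 1 2 1, hD1 2 1 1, hD2 2 1 1, hD1 1 1 2, hD2 1 1 2]
  have hc122 : D 1 2 2 = 0 := by linarith [hD1 1 2 2, hD2 1 2 2, hD1 2 1 2, hD2 2 1 2, hD1 2 2 1, hD2 2 2 1]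
  have hc130 : D 1 3 0 = D 0 1 3 := by linarith [hD1 0 3 1, hD2 0 3 1, hD1 0 1 3, hD2 0 1 3, hD1 3 1 0, hD2 3 1 0, hD1 1 0 3, hD2 1 0 3, hD1 1 3 0, hD2 1 3 0, hD1 3 0 1, hD2 3 0 1]
  have hc131 : D 1 3 1 = 0 := by linarith [hD1 1 1 3, hD2 1 1 3, hD1 1 3 1, hD2 1 3 1, hD1 3 1 1, hD2 3 1 1]
  have hc132 : D 1 3 2 = -D 1 2 3 := by linarith [hD1 1 3 2, hD2 1 3 2, hD1 1 2 3, hD2 1 2 3, hD1 2 1 3, hD2 2 1 3, hD1 3 2 1, hD2 3 2 1, hD1 3 1 2, hD2 3 1 2, hD1 2 3 1, hD2 2 3 1]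
  have hc133 : D 1 3 3 = 0 := by linarith [hD1 3 1 3, hD2 3 1 3, hD1 3 3 1, hD2 3 3 1, hD1 1 3 3, hD2 1 3 3]
  have hc200 : D 2 0 0 = 0 := by linarith [hD1 0 2 0, hD2 0 2 0, hD1 0 0 2, hD2 0 0 2, hD1 2 0 0, hD2 2 0 0]
  have hc201 : D 2 0 1 = D 0 1 2 := by linarith [hD1 0 2 1, hD2 0 2 1, hD1 1 2 0, hD2 1 2 0, hD1 2 1 0, hD2 2 1 0, hD1 2 0 1, hD2 2 0 1, hD1 0 1 2, hD2 0 1 2, hD1 1 0 2, hD2 1 0 2]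
  have hc202 : D 2 0 2 = 0 := by linarith [hD1 0 2 2, hD2 0 2 2, hD1 2 0 2, hD2 2 0 2, hD1 2 2 0, hD2 2 2 0]
  have hc203 : D 2 0 3 = -D 0 2 3 := by linarith [hD1 2 3 0, hD2 2 3 0, hD1 0 2 3, hD2 0 2 3, hD1 3 0 2, hD2 3 0 2, hD1 2 0 3, hD2 2 0 3, hD1 0 3 2, hD2 0 3 2, hD1 3 2 0, hD2 3 2 0]
  have hc210 : D 2 1 0 = -D 0 1 2 := by linarith [hD1 0 2 1, hD2 0 2 1, hD1 1 2 0, hD2 1 2 0, hD1 2 1 0, hD2 2 1 0, hD1 2 0 1, hD2 2 0 1, hD1 0 1 2, hD2 0 1 2, hD1 1 0 2, hD2 1 0 2]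
  have hc211 : D 2 1 1 = 0 := by linarith [hD1 1 2 1, hD2 1 2 1, hD1 2 1 1, hD2 2 1 1, hD1 1 1 2, hD2 1 1 2]
  have hc212 : D 2 1 2 = 0 := by linarith [hD1 1 2 2, hD2 1 2 2, hD1 2 1 2, hD2 2 1 2, hD1 2 2 1, hD2 2 2 1]
  have hc213 : D 2 1 3 = -D 1 2 3 := by linarith [hD1 1 3 2, hD2 1 3 2, hD1 1 2 3, hD2 1 2 3, hD1 2 1 3, hD2 2 1 3, hD1 3 2 1, hD2 3 2 1, hD1 3 1 2, hD2 3 1 2, hD1 2 3 1, hD2 2 3 1]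
  have hc220 : D 2 2 0 = 0 := by linarith [hD1 0 2 2, hD2 0 2 2, hD1 2 0 2, hD2 2 0 2, hD1 2 2 0, hD2 2 2 0]
  have hc221 : D 2 2 1 = 0 := by linarith [hD1 1 2 2, hD2 1 2 2, hD1 2 1 2, hD2 2 1 2, hD1 2 2 1, hD2 2 2 1]
  have hc222 : D 2 2 2 = 0 := by linarith [hD1 2 2 2, hD2 2 2 2]
  have hc223 : D 2 2 3 = 0 := by linarith [hD1 2 2 3, hD2 2 2 3, hD1 2 3 2, hD2 2 3 2, hD1 3 2 2, hD2 3 2 2]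
  have hc230 : D 2 3 0 = D 0 2 3 := by linarith [hD1 2 3 0, hD2 2 3 0, hD1 0 2 3, hD2 0 2 3, hD1 3 0 2, hD2 3 0 2, hD1 2 0 3, hD2 2 0 3, hD1 0 3 2, hD2 0 3 2, hD1 3 2 0, hD2 3 2 0]
  have hc231 : D 2 3 1 = D 1 2 3 := by linarith [hD1 1 3 2, hD2 1 3 2, hD1 1 2 3, hD2 1 2 3, hD1 2 1 3, hD2 2 1 3, hD1 3 2 1, hD2 3 2 1, hD1 3 1 2, hD2 3 1 2, hD1 2 3 1, hD2 2 3 1]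
  have hc232 : D 2 3 2 = 0 := by linarith [hD1 2 2 3, hD2 2 2 3, hD1 2 3 2, hD2 2 3 2, hD1 3 2 2, hD2 3 2 2]
  have hc233 : D 2 3 3 = 0 := by linarith [hD1 3 3 2, hD2 3 3 2, hD1 2 3 3, hD2 2 3 3, hD1 3 2 3, hD2 3 2 3]
  have hc300 : D 3 0 0 = 0 := by linarith [hD1 3 0 0, hD2 3 0 0, hD1 0 3 0, hD2 0 3 0, hD1 0 0 3, hD2 0 0 3]
  have hc301 : D 3 0 1 = D 0 1 3 := by linarith [hD1 0 3 1, hD2 0 3 1, hD1 0 1 3, hD2 0 1 3, hD1 3 1 0, hD2 3 1 0, hD1 1 0 3, hD2 1 0 3, hD1 1 3 0, hD2 1 3 0, hD1 3 0 1, hD2 3 0 1]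
  have hc302 : D 3 0 2 = D 0 2 3 := by linarith [hD1 3 2 0, hD2 3 2 0, hD1 0 2 3, hD2 0 2 3, hD1 3 0 2, hD2 3 0 2, hD1 2 0 3, hD2 2 0 3, hD1 0 3 2, hD2 0 3 2, hD1 2 3 0, hD2 2 3 0]
  have hc303 : D 3 0 3 = 0 := by linarith [hD1 3 3 0, hD2 3 3 0, hD1 3 0 3, hD2 3 0 3, hD1 0 3 3, hD2 0 3 3]
  have hc310 : D 3 1 0 = -D 0 1 3 := by linarith [hD1 0 3 1, hD2 0 3 1, hD1 0 1 3, hD2 0 1 3, hD1 3 1 0, hD2 3 1 0, hD1 1 0 3, hD2 1 0 3, hD1 1 3 0, hD2 1 3 0, hD1 3 0 1, hD2 3 0 1]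
  have hc311 : D 3 1 1 = 0 := by linarith [hD1 1 1 3, hD2 1 1 3, hD1 1 3 1, hD2 1 3 1, hD1 3 1 1, hD2 3 1 1]
  have hc312 : D 3 1 2 = D 1 2 3 := by linarith [hD1 1 3 2, hD2 1 3 2, hD1 1 2 3, hD2 1 2 3, hD1 2 1 3, hD2 2 1 3, hD1 3 2 1, hD2 3 2 1, hD1 3 1 2, hD2 3 1 2, hD1 2 3 1, hD2 2 3 1]
  have hc313 : D 3 1 3 = 0 := by linarith [hD1 3 1 3, hD2 3 1 3, hD1 3 3 1, hD2 3 3 1, hD1 1 3 3, hD2 1 3 3]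
  have hc320 : D 3 2 0 = -D 0 2 3 := by linarith [hD1 3 2 0, hD2 3 2 0, hD1 0 2 3, hD2 0 2 3, hD1 3 0 2, hD2 3 0 2, hD1 2 0 3, hD2 2 0 3, hD1 0 3 2, hD2 0 3 2, hD1 2 3 0, hD2 2 3 0]
  have hc321 : D 3 2 1 = -D 1 2 3 := by linarith [hD1 1 3 2, hD2 1 3 2, hD1 1 2 3, hD2 1 2 3, hD1 2 1 3, hD2 2 1 3, hD1 3 2 1, hD2 3 2 1, hD1 3 1 2, hD2 3 1 2, hD1 2 3 1, hD2 2 3 1]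
  have hc322 : D 3 2 2 = 0 := by linarith [hD1 2 2 3, hD2 2 2 3, hD1 2 3 2, hD2 2 3 2, hD1 3 2 2, hD2 3 2 2]
  have hc323 : D 3 2 3 = 0 := by linarith [hD1 3 3 2, hD2 3 3 2, hD1 2 3 3, hD2 2 3 3, hD1 3 2 3, hD2 3 2 3]
  have hc330 : D 3 3 0 = 0 := by linarith [hD1 3 3 0, hD2 3 3 0, hD1 3 0 3, hD2 3 0 3, hD1 0 3 3, hD2 0 3 3]
  have hc331 : D 3 3 1 = 0 := by linarith [hD1 3 1 3, hD2 3 1 3, hD1 3 3 1, hD2 3 3 1, hD1 1 3 3, hD2 1 3 3]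
  have hc332 : D 3 3 2 = 0 := by linarith [hD1 2 3 3, hD2 2 3 3, hD1 3 3 2, hD2 3 3 2, hD1 3 2 3, hD2 3 2 3]
  have hc333 : D 3 3 3 = 0 := by linarith [hD1 3 3 3, hD2 3 3 3]
  simp only [Bf, B1f, B2f, B3f, t1f, t2f, asym, Fin.sum_univ_four,
    hc000, hc001, hc002, hc003, hc010, hc011, hc020, hc021, hc022, hc030, hc031, hc032, hc033, hc100, hc101, hc102, hc103, hc110, hc111, hc112, hc113, hc120, hc121, hc122, hc130, hc131, hc132, hc133, hc200, hc201, hc202, hc203, hc210, hc211, hc212, hc213, hc220, hc221, hc222, hc223, hc230, hc231, hc232, hc233, hc300, hc301, hc302, hc303, hc310, hc311, hc312, hc313, hc320, hc321, hc322, hc323, hc330, hc331, hc332, hc333]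
  ring


/-- For λ = 1, the derivative of `q` vanishes at `H ∈ W` iff the part of
`H` symmetric in the last two indices agrees with that of `K`
(`H_{abc} + H_{acb} = K_{abc} + K_{acb}`, the totally antisymmetric part of `H` remaining
undetermined); moreover `q` takes the same value, namely `q(K)`, at every critical point. -/
theorem statement15 (K : Wsub) :
    (∀ H : Wsub, fderiv ℝ (fun H : Wsub => qfun 1 (K : T3) (H : T3)) H = 0 ↔
      ∀ a b c : Idx, (H : T3) a b c + (H : T3) a c b = (K : T3) a b c + (K : T3) a c b) ∧
    (∀ H : Wsub, fderiv ℝ (fun H : Wsub => qfun 1 (K : T3) (H : T3)) H = 0 →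
      qfun 1 (K : T3) (H : T3) = qfun 1 (K : T3) (K : T3)) := by
  have hsub : ∀ H K : Wsub, ((H - K : Wsub) : T3) = (H : T3) - (K : T3) := fun _ _ => rfl
  constructor
  · intro H
    rw [crit_iff]
    have hH : ∀ a b c, (H : T3) a b c = -(H : T3) b a c := H.2
    have hK : ∀ a b c, (K : T3) a b c = -(K : T3) b a c := K.2
    have hD1 : ∀ a b c : Idx, ((H : T3) - (K : T3)) a b c = -((H : T3) - (K : T3)) b a c := by
      intro a b c
      simp only [Pi.sub_apply]
      rw [hH a b c, hK a b c]; ring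
    constructor
    · intro h a b c
      have hfw := key_fwd ((H : T3) - (K : T3)) hD1
        (fun X hX => by simpa using h ⟨X, hX⟩) a b c
      simp only [Pi.sub_apply] at hfw
      linarith
    · intro hsym X
      have hD2 : ∀ a b c : Idx, ((H : T3) - (K : T3)) a b c = -((H : T3) - (K : T3)) a c b := by
        intro a b c
        simp only [Pi.sub_apply]
        have := hsym a b c
        linarith
      exact key_bwd ((H : T3) - (K : T3)) hD1 hD2 (X : T3) X.2
  · intro H hcrit
    rw [crit_iff] at hcrit
    have h1 : Bf ((H : T3) - (K : T3)) ((H : T3) - (K : T3)) = 0 := by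
      have := hcrit (H - K)
      rwa [hsub] at this
    rw [Bf_sub_left, Bf_sub_right, Bf_sub_right] at h1
    have hsymm : Bf (K : T3) (H : T3) = Bf (H : T3) (K : T3) := Bf_symm K.2 H.2
    rw [qfun_eq, qfun_eq]
    linarith
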